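/- Let 0 < α < 1, ρ > 0, 0 < β < 1, set λ₀ = ρ/√(1−α), θ₀ = θ(λ₀), let 0 < R < θ₀, and let λ₂ ∈ (λ₀, ∞) be the larger of the two solutions of θ(λ) = R. Then there exist constants c, C > 0, depending only on α, ρ and β, such that for every λ ∈ [λ₀, ∞) with λ ∉ (β·λ₂, β^{−1}·λ₂) one has c·(min{λ, λ₂})^{−(1−α)} ≤ |ψ_R′(λ)| ≤ C·(min{λ, λ₂})^{−(1−α)}. -/

import Mathlib

/-- `θ(λ) = α·λ·(λ² + ρ²)^{−(1−α/2)}`. -/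
noncomputable def theta (α ρ lam : ℝ) : ℝ :=
  α * lam * (lam ^ 2 + ρ ^ 2) ^ (-(1 - α / 2))

/-- The phase `ψ_R(λ) = (λ² + ρ²)^{α/2} − R·λ`, so that `ψ_R′(λ) = θ(λ) − R`. -/
noncomputable def psi (α ρ R lam : ℝ) : ℝ :=
  (lam ^ 2 + ρ ^ 2) ^ (α / 2) - R * lam

open Real Set

lemma theta_hasDerivAt (α : ℝ) {ρ : ℝ} (hρ : 0 < ρ) (t : ℝ) :
    HasDerivAt (theta α ρ)
      (α * (t ^ 2 + ρ ^ 2) ^ (α / 2 - 2) * (ρ ^ 2 - (1 - α) * t ^ 2)) t := by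
  have hpos : (0:ℝ) < t ^ 2 + ρ ^ 2 := by positivity
  have hb : HasDerivAt (fun x : ℝ => x ^ 2 + ρ ^ 2) (2 * t) t := by
    simpa using ((hasDerivAt_pow 2 t).add_const (ρ ^ 2))
  have h1 : HasDerivAt (fun x : ℝ => (x ^ 2 + ρ ^ 2) ^ (-(1 - α / 2)))
      (2 * t * (-(1 - α / 2)) * (t ^ 2 + ρ ^ 2) ^ (-(1 - α / 2) - 1)) t :=
    hb.rpow_const (Or.inl hpos.ne')
  have h2 : HasDerivAt (fun x : ℝ => α * x) α t := by
    simpa using (hasDerivAt_id t).const_mul α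
  have h3 := h2.mul h1
  have key : (t ^ 2 + ρ ^ 2) ^ (-(1 - α / 2))
      = (t ^ 2 + ρ ^ 2) ^ (α / 2 - 2) * (t ^ 2 + ρ ^ 2) := by
    rw [show -(1 - α / 2) = (α / 2 - 2) + 1 by ring, Real.rpow_add hpos, Real.rpow_one]
  have e2 : -(1 - α / 2) - 1 = α / 2 - 2 := by ring
  rw [e2] at h3
  refine h3.congr_deriv ?_
  rw [key]; ring

lemma psi_hasDerivAt (α R : ℝ) {ρ : ℝ} (hρ : 0 < ρ) (t : ℝ) :
    HasDerivAt (psi α ρ R) (theta α ρ t - R) t := by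
  have hpos : (0:ℝ) < t ^ 2 + ρ ^ 2 := by positivity
  have hb : HasDerivAt (fun x : ℝ => x ^ 2 + ρ ^ 2) (2 * t) t := by
    simpa using ((hasDerivAt_pow 2 t).add_const (ρ ^ 2))
  have h1 : HasDerivAt (fun x : ℝ => (x ^ 2 + ρ ^ 2) ^ (α / 2))
      (2 * t * (α / 2) * (t ^ 2 + ρ ^ 2) ^ (α / 2 - 1)) t :=
    hb.rpow_const (Or.inl hpos.ne')
  have h2 : HasDerivAt (fun x : ℝ => R * x) R t := by
    simpa using (hasDerivAt_id t).const_mul R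
  have h3 := h1.sub h2
  refine h3.congr_deriv ?_
  unfold theta
  rw [show -(1 - α / 2) = α / 2 - 1 by ring]
  ring

lemma theta_pos {α ρ : ℝ} (hα0 : 0 < α) (hρ : 0 < ρ) {t : ℝ} (ht : 0 < t) :
    0 < theta α ρ t := by
  unfold theta
  have hpos : (0:ℝ) < t ^ 2 + ρ ^ 2 := by positivity
  have := Real.rpow_pos_of_pos hpos (-(1 - α / 2))
  positivity

lemma theta_le {α ρ : ℝ} (hα0 : 0 < α) (hα1 : α < 1) (hρ : 0 < ρ) {t : ℝ} (ht : 0 < t) :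
    theta α ρ t ≤ α * t ^ (α - 1) := by
  unfold theta
  have hpos : (0:ℝ) < t ^ 2 + ρ ^ 2 := by positivity
  have ht2 : (0:ℝ) < t ^ 2 := by positivity
  have h1 : (t ^ 2 + ρ ^ 2) ^ (-(1 - α / 2)) ≤ (t ^ 2) ^ (-(1 - α / 2)) :=
    Real.rpow_le_rpow_of_nonpos ht2 (by nlinarith) (by linarith)
  have h2 : (t ^ 2 : ℝ) ^ (-(1 - α / 2)) = t ^ (α - 2) := by
    rw [← Real.rpow_natCast t 2, ← Real.rpow_mul ht.le]
    norm_num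
    ring_nf
  have h3 : t * t ^ (α - 2) = t ^ (α - 1) := by
    rw [show t * t ^ (α - 2) = t ^ (1:ℝ) * t ^ (α - 2) by rw [Real.rpow_one],
      ← Real.rpow_add ht]
    ring_nf
  calc α * t * (t ^ 2 + ρ ^ 2) ^ (-(1 - α / 2))
      ≤ α * t * (t ^ 2) ^ (-(1 - α / 2)) := by
        apply mul_le_mul_of_nonneg_left h1
        positivity
    _ = α * t ^ (α - 1) := by rw [h2, mul_assoc, h3]

lemma sq_rpow' {t : ℝ} (ht : 0 < t) (z : ℝ) : ((t ^ 2 : ℝ)) ^ z = t ^ (2 * z) := by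
  rw [← Real.rpow_natCast t 2, ← Real.rpow_mul ht.le]
  norm_num

lemma rpow_mul_sq {t : ℝ} (ht : 0 < t) (z : ℝ) : t ^ z * t ^ 2 = t ^ (z + 2) := by
  rw [← Real.rpow_natCast t 2, ← Real.rpow_add ht]
  norm_num

lemma theta_anti {α ρ lam0 : ℝ} (hα0 : 0 < α) (hα1 : α < 1) (hρ : 0 < ρ)
    (hlam0 : lam0 = ρ / Real.sqrt (1 - α)) :
    AntitoneOn (theta α ρ) (Set.Ici lam0) := by
  have h1α : (0:ℝ) < 1 - α := by linarith
  have hs1α : 0 < Real.sqrt (1 - α) := Real.sqrt_pos.2 h1α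
  have hl0pos : 0 < lam0 := by rw [hlam0]; positivity
  have hl0sq : ρ ^ 2 = (1 - α) * lam0 ^ 2 := by
    rw [hlam0, div_pow, Real.sq_sqrt h1α.le]; field_simp
  apply antitoneOn_of_deriv_nonpos (convex_Ici lam0)
  · exact fun x _ => ((theta_hasDerivAt α hρ x).continuousAt).continuousWithinAt
  · exact fun x _ => (theta_hasDerivAt α hρ x).differentiableAt.differentiableWithinAt
  · intro x hx
    rw [interior_Ici] at hx
    have hx0 : lam0 < x := hx
    rw [(theta_hasDerivAt α hρ x).deriv]
    have hQ : ρ ^ 2 - (1 - α) * x ^ 2 ≤ 0 := by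
      nlinarith [mul_pos (sub_pos.2 hx0) (show (0:ℝ) < x + lam0 by linarith)]
    have hP : (0:ℝ) < (x ^ 2 + ρ ^ 2) ^ (α / 2 - 2) :=
      Real.rpow_pos_of_pos (by positivity) _
    apply mul_nonpos_of_nonneg_of_nonpos (by positivity) hQ

set_option maxHeartbeats 1000000 in
lemma theta_gap {α ρ β lam0 : ℝ} (hα0 : 0 < α) (hα1 : α < 1) (hρ : 0 < ρ)
    (hβ0 : 0 < β) (hβ1 : β < 1) (hlam0 : lam0 = ρ / Real.sqrt (1 - α))
    {μ : ℝ} (hμ : lam0 ≤ μ) :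
    (α * 2 ^ (α / 2 - 2) * (1 - α) * (1 - β) * β ^ ((2:ℝ) - α)
        * (β⁻¹ - (Real.sqrt β)⁻¹)) * μ ^ (α - 1)
      ≤ theta α ρ (μ / Real.sqrt β) - theta α ρ (μ / β) := by
  have h1α : (0:ℝ) < 1 - α := by linarith
  have hs1α : 0 < Real.sqrt (1 - α) := Real.sqrt_pos.2 h1α
  have hl0pos : 0 < lam0 := by rw [hlam0]; positivity
  have hμpos : 0 < μ := hl0pos.trans_le hμ
  have hl0sq : ρ ^ 2 = (1 - α) * lam0 ^ 2 := by
    rw [hlam0, div_pow, Real.sq_sqrt h1α.le]; field_simp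
  have hsβ : 0 < Real.sqrt β := Real.sqrt_pos.2 hβ0
  have hsβsq : Real.sqrt β ^ 2 = β := Real.sq_sqrt hβ0.le
  have hsβ1 : Real.sqrt β < 1 := by
    rw [show (1:ℝ) = Real.sqrt 1 by simp]
    exact Real.sqrt_lt_sqrt hβ0.le hβ1
  have hβsβ : β < Real.sqrt β := by nlinarith
  set a := μ / Real.sqrt β with ha
  set b := μ / β with hb
  have hab : a < b := by rw [ha, hb, div_lt_div_iff₀ hsβ hβ0]; nlinarith
  set f' : ℝ → ℝ := fun t => α * (t ^ 2 + ρ ^ 2) ^ (α / 2 - 2) * (ρ ^ 2 - (1 - α) * t ^ 2)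
    with hf'
  obtain ⟨ξ, hξ, hs⟩ := exists_hasDerivAt_eq_slope (theta α ρ) f' hab
    (fun x _ => ((theta_hasDerivAt α hρ x).continuousAt).continuousWithinAt)
    (fun x _ => theta_hasDerivAt α hρ x)
  have hξa : a < ξ := hξ.1
  have hξb : ξ < b := hξ.2
  have hapos : 0 < a := by rw [ha]; positivity
  have hξpos : 0 < ξ := lt_trans hapos hξa
  -- ρ² ≤ β(1-α)ξ²
  have h1 : μ ≤ ξ * Real.sqrt β := by
    rw [ha, div_lt_iff₀ hsβ] at hξa; linarith
  have h2 : lam0 ≤ ξ * Real.sqrt β := le_trans hμ h1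
  have h3 : lam0 ^ 2 ≤ ξ ^ 2 * β := by
    calc lam0 ^ 2 ≤ (ξ * Real.sqrt β) ^ 2 := by nlinarith
      _ = ξ ^ 2 * β := by rw [mul_pow, hsβsq]
  have hρξ : ρ ^ 2 ≤ β * (1 - α) * ξ ^ 2 := by nlinarith
  have hle2 : ξ ^ 2 + ρ ^ 2 ≤ 2 * ξ ^ 2 := by nlinarith
  -- bound -(f' ξ) from below
  have hP : (2 * ξ ^ 2 : ℝ) ^ (α / 2 - 2) ≤ (ξ ^ 2 + ρ ^ 2) ^ (α / 2 - 2) :=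
    Real.rpow_le_rpow_of_nonpos (by positivity) hle2 (by linarith)
  have hP2 : (2 * ξ ^ 2 : ℝ) ^ (α / 2 - 2)
      = 2 ^ (α / 2 - 2) * ξ ^ (α - 4) := by
    rw [Real.mul_rpow (by norm_num) (sq_nonneg ξ), sq_rpow' hξpos,
      show 2 * (α / 2 - 2) = α - 4 by ring]
  have hQ : (1 - α) * (1 - β) * ξ ^ 2 ≤ (1 - α) * ξ ^ 2 - ρ ^ 2 := by nlinarith
  have hKξ : α * 2 ^ (α / 2 - 2) * (1 - α) * (1 - β) * ξ ^ (α - 2) ≤ -(f' ξ) := by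
    have hfx : -(f' ξ) = α * ((ξ ^ 2 + ρ ^ 2) ^ (α / 2 - 2)) * ((1 - α) * ξ ^ 2 - ρ ^ 2) := by
      rw [hf']; ring
    rw [hfx]
    have hP0pos : (0:ℝ) < 2 ^ (α / 2 - 2) * ξ ^ (α - 4) := by
      have := Real.rpow_pos_of_pos hξpos (α - 4)
      have := Real.rpow_pos_of_pos (show (0:ℝ) < 2 by norm_num) (α / 2 - 2)
      positivity
    have hstep : α * (2 ^ (α / 2 - 2) * ξ ^ (α - 4)) * ((1 - α) * (1 - β) * ξ ^ 2)
        ≤ α * ((ξ ^ 2 + ρ ^ 2) ^ (α / 2 - 2)) * ((1 - α) * ξ ^ 2 - ρ ^ 2) := by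
      apply mul_le_mul
      · apply mul_le_mul_of_nonneg_left _ hα0.le
        rw [← hP2]; exact hP
      · exact hQ
      · nlinarith [sq_nonneg ξ]
      · have := Real.rpow_pos_of_pos (show (0:ℝ) < ξ^2+ρ^2 by positivity) (α / 2 - 2)
        positivity
    refine le_trans (le_of_eq ?_) hstep
    have hxx : ξ ^ (α - 4) * ξ ^ 2 = ξ ^ (α - 2) := by
      rw [rpow_mul_sq hξpos, show α - 4 + 2 = α - 2 by ring]
    rw [← hxx]; ring
  -- ξ^(α-2) ≥ β^(2-α) μ^(α-2)
  have hξμ : β ^ ((2:ℝ) - α) * μ ^ (α - 2) ≤ ξ ^ (α - 2) := by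
    have h1' : b ^ (α - 2) ≤ ξ ^ (α - 2) :=
      Real.rpow_le_rpow_of_nonpos hξpos hξb.le (by linarith)
    have h2' : (b : ℝ) ^ (α - 2) = β ^ ((2:ℝ) - α) * μ ^ (α - 2) := by
      rw [hb, Real.div_rpow hμpos.le hβ0.le,
        show (α - 2 : ℝ) = -(2 - α) by ring, Real.rpow_neg hβ0.le,
        div_eq_mul_inv, inv_inv]
      ring
    rw [← h2']; exact h1'
  -- MVT identity
  have hba : 0 < b - a := by linarith
  have heq : theta α ρ a - theta α ρ b = (b - a) * (-(f' ξ)) := by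
    rw [eq_div_iff hba.ne'] at hs
    nlinarith [hs]
  rw [heq]
  have hdμ : b - a = μ * (β⁻¹ - (Real.sqrt β)⁻¹) := by
    rw [hb, ha, div_eq_mul_inv, div_eq_mul_inv]; ring
  have hdpos : 0 < β⁻¹ - (Real.sqrt β)⁻¹ := by
    rw [sub_pos]
    exact inv_strictAnti₀ hβ0 hβsβ
  have hchain : α * 2 ^ (α / 2 - 2) * (1 - α) * (1 - β)
      * (β ^ ((2:ℝ) - α) * μ ^ (α - 2)) ≤ -(f' ξ) := by
    refine le_trans ?_ hKξ
    apply mul_le_mul_of_nonneg_left hξμ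
    have h2p := Real.rpow_pos_of_pos (show (0:ℝ) < 2 by norm_num) (α / 2 - 2)
    exact mul_nonneg (mul_nonneg (mul_nonneg hα0.le h2p.le) (by linarith)) (by linarith)
  have hμ12 : μ * μ ^ (α - 2) = μ ^ (α - 1) := by
    rw [show μ * μ ^ (α - 2) = μ ^ (α - 2) * μ ^ (1:ℝ) by rw [Real.rpow_one]; ring,
      ← Real.rpow_add hμpos, show α - 2 + 1 = α - 1 by ring]
  calc α * 2 ^ (α / 2 - 2) * (1 - α) * (1 - β) * β ^ ((2:ℝ) - α)
        * (β⁻¹ - (Real.sqrt β)⁻¹) * μ ^ (α - 1)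
      = (μ * (β⁻¹ - (Real.sqrt β)⁻¹))
        * (α * 2 ^ (α / 2 - 2) * (1 - α) * (1 - β) * (β ^ ((2:ℝ) - α) * μ ^ (α - 2))) := by
        rw [← hμ12]; ring
    _ ≤ (b - a) * (-(f' ξ)) := by
        rw [hdμ]
        apply mul_le_mul_of_nonneg_left hchain
        exact mul_nonneg hμpos.le hdpos.le


lemma theta_bound {α ρ β lam0 : ℝ} (hα0 : 0 < α) (hα1 : α < 1) (hρ : 0 < ρ)
    (hβ0 : 0 < β) (hβ1 : β < 1) (hlam0 : lam0 = ρ / Real.sqrt (1 - α))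
    {μ M : ℝ} (hμ : lam0 ≤ μ) (hM : μ / β ≤ M) :
    (α * 2 ^ (α / 2 - 2) * (1 - α) * (1 - β) * β ^ ((2:ℝ) - α)
        * (β⁻¹ - (Real.sqrt β)⁻¹)) * μ ^ (α - 1)
      ≤ theta α ρ μ - theta α ρ M
    ∧ theta α ρ μ - theta α ρ M ≤ α * μ ^ (α - 1) := by
  have h1α : (0:ℝ) < 1 - α := by linarith
  have hs1α : 0 < Real.sqrt (1 - α) := Real.sqrt_pos.2 h1α
  have hl0pos : 0 < lam0 := by rw [hlam0]; positivity
  have hμpos : 0 < μ := hl0pos.trans_le hμ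
  have hsβ : 0 < Real.sqrt β := Real.sqrt_pos.2 hβ0
  have hsβsq : Real.sqrt β ^ 2 = β := Real.sq_sqrt hβ0.le
  have hsβ1 : Real.sqrt β < 1 := by
    rw [show (1:ℝ) = Real.sqrt 1 by simp]
    exact Real.sqrt_lt_sqrt hβ0.le hβ1
  have hβsβ : β < Real.sqrt β := by nlinarith
  have hanti := theta_anti hα0 hα1 hρ hlam0
  have hμa : μ ≤ μ / Real.sqrt β := by
    rw [le_div_iff₀ hsβ]; nlinarith
  have hab : μ / Real.sqrt β ≤ μ / β := by
    rw [div_le_div_iff₀ hsβ hβ0]; nlinarith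
  have hbM : μ / β ≤ M := hM
  have hμM : μ ≤ M := le_trans (le_trans hμa hab) hbM
  have hMm : lam0 ≤ M := le_trans hμ hμM
  have haI : lam0 ≤ μ / Real.sqrt β := le_trans hμ hμa
  have hbI : lam0 ≤ μ / β := le_trans haI hab
  have h1 : theta α ρ (μ / Real.sqrt β) ≤ theta α ρ μ := hanti hμ haI hμa
  have h2 : theta α ρ M ≤ theta α ρ (μ / β) := hanti hbI hMm hbM
  have hgap := theta_gap hα0 hα1 hρ hβ0 hβ1 hlam0 hμ
  constructor
  · linarith
  · have hMpos : 0 < M := lt_of_lt_of_le hl0pos hMm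
    have h3 := theta_pos hα0 hρ hMpos
    have h4 := theta_le hα0 hα1 hρ hμpos
    linarith

theorem stmt5 (α ρ β : ℝ) (hα0 : 0 < α) (hα1 : α < 1) (hρ : 0 < ρ)
    (hβ0 : 0 < β) (hβ1 : β < 1)
    (lam0 θ0 : ℝ) (hlam0 : lam0 = ρ / Real.sqrt (1 - α)) (hθ0 : θ0 = theta α ρ lam0) :
    ∃ c C : ℝ, 0 < c ∧ 0 < C ∧
      ∀ R lam2 : ℝ, 0 < R → R < θ0 → lam2 ∈ Set.Ioi lam0 → theta α ρ lam2 = R →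
        ∀ lam : ℝ, lam0 ≤ lam → lam ∉ Set.Ioo (β * lam2) (β⁻¹ * lam2) →
          c * (min lam lam2) ^ (-(1 - α)) ≤ |deriv (psi α ρ R) lam| ∧
          |deriv (psi α ρ R) lam| ≤ C * (min lam lam2) ^ (-(1 - α)) := by
  have h1α : (0:ℝ) < 1 - α := by linarith
  have hs1α : 0 < Real.sqrt (1 - α) := Real.sqrt_pos.2 h1α
  have hl0pos : 0 < lam0 := by rw [hlam0]; positivity
  have hsβ : 0 < Real.sqrt β := Real.sqrt_pos.2 hβ0
  have hsβ1 : Real.sqrt β < 1 := by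
    rw [show (1:ℝ) = Real.sqrt 1 by simp]
    exact Real.sqrt_lt_sqrt hβ0.le hβ1
  have hβsβ : β < Real.sqrt β := by nlinarith [Real.sq_sqrt hβ0.le]
  have hdpos : 0 < β⁻¹ - (Real.sqrt β)⁻¹ := by
    rw [sub_pos]
    exact inv_strictAnti₀ hβ0 hβsβ
  have h2p := Real.rpow_pos_of_pos (show (0:ℝ) < 2 by norm_num) (α / 2 - 2)
  have hβp := Real.rpow_pos_of_pos hβ0 ((2:ℝ) - α)
  have hcpos : 0 < α * 2 ^ (α / 2 - 2) * (1 - α) * (1 - β) * β ^ ((2:ℝ) - α)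
      * (β⁻¹ - (Real.sqrt β)⁻¹) := by
    have hβ1' : (0:ℝ) < 1 - β := by linarith
    exact mul_pos (mul_pos (mul_pos (mul_pos (mul_pos hα0 h2p) h1α) hβ1') hβp) hdpos
  refine ⟨α * 2 ^ (α / 2 - 2) * (1 - α) * (1 - β) * β ^ ((2:ℝ) - α)
    * (β⁻¹ - (Real.sqrt β)⁻¹), α, hcpos, hα0, ?_⟩
  intro R lam2 hR _ hlam2 hθlam2 lam hlam hnot
  have hlam2' : lam0 < lam2 := hlam2
  have hlampos : 0 < lam := lt_of_lt_of_le hl0pos hlam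
  have hlam2pos : 0 < lam2 := hl0pos.trans hlam2'
  have hderiv : deriv (psi α ρ R) lam = theta α ρ lam - R := (psi_hasDerivAt α R hρ lam).deriv
  rw [Set.mem_Ioo, not_and_or, not_lt, not_lt] at hnot
  have hexp : (-(1 - α) : ℝ) = α - 1 := by ring
  rw [hderiv, hexp, ← hθlam2]
  rcases hnot with hcase | hcase
  · -- lam ≤ β * lam2 : min = lam
    have hmin : min lam lam2 = lam := min_eq_left (by nlinarith)
    rw [hmin]
    have hM : lam / β ≤ lam2 := by rw [div_le_iff₀ hβ0]; nlinarith
    obtain ⟨hlow, hup⟩ := theta_bound hα0 hα1 hρ hβ0 hβ1 hlam0 hlam hM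
    have habs : |theta α ρ lam - theta α ρ lam2| = theta α ρ lam - theta α ρ lam2 := by
      apply abs_of_nonneg
      have hpos' := mul_pos hcpos (Real.rpow_pos_of_pos hlampos (α - 1))
      linarith
    rw [habs]
    exact ⟨hlow, hup⟩
  · -- β⁻¹ * lam2 ≤ lam : min = lam2
    have hβinv : 1 < β⁻¹ := by
      have := inv_strictAnti₀ hβ0 hβ1
      simpa using this
    have hle : lam2 ≤ lam := le_trans (by nlinarith) hcase
    have hmin : min lam lam2 = lam2 := min_eq_right hle
    rw [hmin]
    have hββ : β * β⁻¹ = 1 := mul_inv_cancel₀ hβ0.ne'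
    have hM : lam2 / β ≤ lam := by
      rw [div_le_iff₀ hβ0]
      nlinarith [mul_le_mul_of_nonneg_left hcase hβ0.le]
    obtain ⟨hlow, hup⟩ := theta_bound hα0 hα1 hρ hβ0 hβ1 hlam0 hlam2'.le hM
    have habs : |theta α ρ lam - theta α ρ lam2| = theta α ρ lam2 - theta α ρ lam := by
      rw [abs_sub_comm]
      apply abs_of_nonneg
      have hpos' := mul_pos hcpos (Real.rpow_pos_of_pos hlam2pos (α - 1))
      linarith
    rw [habs]
    exact ⟨hlow, hup⟩
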